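/- Let B be a commutative ring with square-zero ideal J, B₀ = B/J, and let A₀ be a formally smooth B₀-algebra. If A and A' are two flat B-algebras together with B₀-algebra isomorphisms A ⊗_B B₀ ≅ A₀ and A' ⊗_B B₀ ≅ A₀ (i.e., two liftings of A₀ over B), then there exists a B-algebra isomorphism g : A → A' reducing to the identity of A₀ modulo J. In other words, liftings of a formally smooth algebra over an affine square-zero extension are unique up to isomorphism. -/

import Mathlib

universe u

open TensorProduct

section Aux

variable {B R : Type*} [CommRing B] [CommRing R] [Algebra B R]

theorem aux_algebraMap_mul_eq_zero {J : Ideal B} (hJ : J ^ 2 = ⊥) {j : B} (hj : j ∈ J)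
    {n : R} (hn : n ∈ J.map (algebraMap B R)) : algebraMap B R j * n = 0 := by
  have hn' : n ∈ Submodule.span R ((algebraMap B R) '' (J : Set B)) := hn
  clear hn
  induction hn' using Submodule.span_induction with
  | mem x hx =>
    obtain ⟨j', hj', rfl⟩ := hx
    rw [← map_mul, show j * j' = 0 by
      have : j * j' ∈ J ^ 2 := by rw [pow_two]; exact Ideal.mul_mem_mul hj hj'
      rwa [hJ, Ideal.mem_bot] at this, map_zero]
  | zero => rw [mul_zero]
  | add x y _ _ hx hy => rw [mul_add, hx, hy, add_zero]
  | smul r x _ hx => rw [smul_eq_mul, mul_left_comm, hx, mul_zero]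

theorem aux_mul_eq_zero {J : Ideal B} (hJ : J ^ 2 = ⊥) {m n : R}
    (hm : m ∈ J.map (algebraMap B R)) (hn : n ∈ J.map (algebraMap B R)) : m * n = 0 := by
  have hm' : m ∈ Submodule.span R ((algebraMap B R) '' (J : Set B)) := hm
  clear hm
  induction hm' using Submodule.span_induction with
  | mem x hx =>
    obtain ⟨j, hj, rfl⟩ := hx
    exact aux_algebraMap_mul_eq_zero hJ hj hn
  | zero => rw [zero_mul]
  | add x y _ _ hx hy => rw [add_mul, hx, hy, add_zero]
  | smul r x _ hx => rw [smul_eq_mul, mul_assoc, hx, mul_zero]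

end Aux

section Bij

variable {B A₀ X : Type*} [CommRing B] [CommRing A₀] [CommRing X]
  [Algebra B X] [Algebra B A₀]

theorem aux_bijective_of_comp {J : Ideal B} (hJ : J ^ 2 = ⊥) (f : X →ₐ[B] A₀)
    (hkf : RingHom.ker f = J.map (algebraMap B X))
    (w : X →ₐ[B] X) (hw : f.comp w = f) : Function.Bijective w := by
  have hd : ∀ a : X, w a - a ∈ J.map (algebraMap B X) := by
    intro a
    have h1 : f (w a) = f a := by simpa using AlgHom.congr_fun hw a
    rw [← hkf, RingHom.mem_ker, map_sub, h1, sub_self]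
  have hfix : ∀ m ∈ J.map (algebraMap B X), w m = m := by
    intro m hm
    have hm' : m ∈ Submodule.span X ((algebraMap B X) '' (J : Set B)) := hm
    clear hm
    induction hm' using Submodule.span_induction with
    | mem x hx =>
      obtain ⟨j, hj, rfl⟩ := hx
      exact w.commutes j
    | zero => exact map_zero w
    | add x y _ _ hx hy => rw [map_add, hx, hy]
    | smul r x hxmem hx =>
      have hxmem' : x ∈ J.map (algebraMap B X) := hxmem
      rw [smul_eq_mul, map_mul, hx]
      have h0 : (w r - r) * x = 0 := aux_mul_eq_zero hJ (hd r) hxmem'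
      calc w r * x = (w r - r) * x + r * x := by ring
      _ = r * x := by rw [h0, zero_add]
  constructor
  · intro a b hab
    have h1 : w (a - b) = 0 := by rw [map_sub, hab, sub_self]
    have h2 : a - b ∈ J.map (algebraMap B X) := by
      have := hd (a - b); rwa [h1, zero_sub, neg_mem_iff] at this
    have h3 := hfix _ h2
    rw [h1] at h3
    exact sub_eq_zero.mp h3.symm
  · intro a
    refine ⟨2 • a - w a, ?_⟩
    have hww : w (w a) = 2 • w a - a := by
      have h2 : w (w a) = w a + w (w a - a) := by rw [← map_add]; congr 1; ring
      rw [h2, hfix _ (hd a)]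
      ring
    rw [map_sub, map_nsmul, hww]
    ring

end Bij

set_option maxHeartbeats 1000000 in
set_option synthInstance.maxHeartbeats 400000 in
theorem exists_lift_aux {B : Type*} {B₀ A₀ : Type u} {X Y : Type*}
    [CommRing B] [CommRing B₀] [CommRing A₀] [CommRing X] [CommRing Y]
    [Algebra B B₀] [Algebra B₀ A₀] [Algebra B A₀] [IsScalarTower B B₀ A₀]
    [Algebra B X] [Algebra B Y]
    (J : Ideal B) (hJ : J ^ 2 = ⊥)
    (hker : RingHom.ker (algebraMap B B₀) = J)
    (hsurj : Function.Surjective (algebraMap B B₀))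
    [Module.Flat B X] [Algebra.FormallySmooth B₀ A₀]
    (f : X →ₐ[B] A₀) (hf : Function.Surjective f)
    (hkf : RingHom.ker f = J.map (algebraMap B X))
    (p : Y →ₐ[B] A₀) (hp : Function.Surjective p)
    (hkp : RingHom.ker p = J.map (algebraMap B Y)) :
    ∃ u : X →ₐ[B] Y, p.comp u = f := by
  classical
  obtain ⟨σ, hσ⟩ : ∃ σ : A₀ → X, ∀ a, f (σ a) = a :=
    ⟨fun a => (hf a).choose, fun a => (hf a).choose_spec⟩
  obtain ⟨s, hs⟩ : ∃ s : A₀ → Y, ∀ a, p (s a) = a :=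
    ⟨fun a => (hp a).choose, fun a => (hp a).choose_spec⟩
  let q : MvPolynomial A₀ B →ₐ[B] X := MvPolynomial.aeval σ
  let h : MvPolynomial A₀ B →ₐ[B] Y := MvPolynomial.aeval s
  let ρ : MvPolynomial A₀ B →+* MvPolynomial A₀ B₀ := MvPolynomial.map (algebraMap B B₀)
  let q₀ : MvPolynomial A₀ B₀ →ₐ[B₀] A₀ := MvPolynomial.aeval (id : A₀ → A₀)
  letI : Algebra (MvPolynomial A₀ B₀) A₀ := q₀.toRingHom.toAlgebra
  haveI : IsScalarTower B₀ (MvPolynomial A₀ B₀) A₀ :=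
    IsScalarTower.of_algebraMap_eq fun b => (q₀.commutes b).symm
  -- basic compatibilities
  have hq0X : ∀ a : A₀, algebraMap (MvPolynomial A₀ B₀) A₀ (MvPolynomial.X a) = a := fun a =>
    MvPolynomial.aeval_X _ a
  have hq0s : Function.Surjective (algebraMap (MvPolynomial A₀ B₀) A₀) :=
    fun a => ⟨MvPolynomial.X a, hq0X a⟩
  have hcomm : ∀ x : MvPolynomial A₀ B,
      algebraMap (MvPolynomial A₀ B₀) A₀ (ρ x) = f (q x) := by
    intro x
    induction x using MvPolynomial.induction_on with
    | C b =>
      rw [show ρ (MvPolynomial.C b) = MvPolynomial.C (algebraMap B B₀ b) from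
        MvPolynomial.map_C _ b]
      rw [show (MvPolynomial.C (algebraMap B B₀ b) : MvPolynomial A₀ B₀)
          = algebraMap B₀ _ (algebraMap B B₀ b) from rfl]
      rw [← IsScalarTower.algebraMap_apply, ← IsScalarTower.algebraMap_apply]
      rw [show q (MvPolynomial.C b) = algebraMap B X b from MvPolynomial.aeval_C _ b]
      rw [f.commutes]
    | add x y hx hy => rw [map_add, map_add, map_add, map_add, hx, hy]
    | mul_X x a hx =>
      rw [map_mul, map_mul, map_mul, map_mul, hx]
      congr 1
      rw [show ρ (MvPolynomial.X a) = MvPolynomial.X a from MvPolynomial.map_X _ a, hq0X]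
      rw [show q (MvPolynomial.X a) = σ a from MvPolynomial.aeval_X _ a, hσ]
  have hph : ∀ x, p (h x) = f (q x) := by
    intro x
    induction x using MvPolynomial.induction_on with
    | C b =>
      rw [show h (MvPolynomial.C b) = algebraMap B Y b from MvPolynomial.aeval_C _ b,
        show q (MvPolynomial.C b) = algebraMap B X b from MvPolynomial.aeval_C _ b,
        p.commutes, f.commutes]
    | add x y hx hy => rw [map_add, map_add, map_add, map_add, hx, hy]
    | mul_X x a hx =>
      rw [map_mul, map_mul, map_mul, map_mul, hx]
      congr 1
      rw [show h (MvPolynomial.X a) = s a from MvPolynomial.aeval_X _ a, hs,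
        show q (MvPolynomial.X a) = σ a from MvPolynomial.aeval_X _ a, hσ]
  have hkerρ : RingHom.ker ρ = J.map (algebraMap B (MvPolynomial A₀ B)) := by
    rw [show (ρ : MvPolynomial A₀ B →+* MvPolynomial A₀ B₀)
        = MvPolynomial.map (algebraMap B B₀) from rfl, MvPolynomial.ker_map, hker]
    rw [MvPolynomial.algebraMap_eq]
  have hρs : Function.Surjective ρ := MvPolynomial.map_surjective _ hsurj
  -- q is surjective
  have hJXrange : ∀ m ∈ J.map (algebraMap B X), ∃ z, q z = m := by
    intro m hm
    have hm' : m ∈ Submodule.span X ((algebraMap B X) '' (J : Set B)) := hm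
    clear hm
    induction hm' using Submodule.span_induction with
    | mem x hx =>
      obtain ⟨j, hj, rfl⟩ := hx
      exact ⟨algebraMap B _ j, q.commutes j⟩
    | zero => exact ⟨0, map_zero q⟩
    | add x y _ _ hx hy =>
      obtain ⟨z1, hz1⟩ := hx; obtain ⟨z2, hz2⟩ := hy
      exact ⟨z1 + z2, by rw [map_add, hz1, hz2]⟩
    | smul r x hxmem hx =>
      obtain ⟨z, hz⟩ := hx
      have hxmem' : x ∈ J.map (algebraMap B X) := hxmem
      refine ⟨MvPolynomial.X (f r) * z, ?_⟩
      rw [map_mul, show q (MvPolynomial.X (f r)) = σ (f r) from MvPolynomial.aeval_X _ _,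
        hz, smul_eq_mul]
      have hdr : r - σ (f r) ∈ J.map (algebraMap B X) := by
        rw [← hkf, RingHom.mem_ker, map_sub, hσ, sub_self]
      have h0 : (r - σ (f r)) * x = 0 := aux_mul_eq_zero hJ hdr hxmem'
      calc σ (f r) * x = r * x - (r - σ (f r)) * x := by ring
      _ = r * x := by rw [h0, sub_zero]
  have hqs : Function.Surjective q := by
    intro a
    have hmem : a - σ (f a) ∈ J.map (algebraMap B X) := by
      rw [← hkf, RingHom.mem_ker, map_sub, hσ, sub_self]
    obtain ⟨z, hz⟩ := hJXrange _ hmem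
    refine ⟨z + MvPolynomial.X (f a), ?_⟩
    rw [map_add, hz, show q (MvPolynomial.X (f a)) = σ (f a) from MvPolynomial.aeval_X _ _]
    ring
  -- key flatness lemma
  have hflat : ∀ x : MvPolynomial A₀ B, q x = 0 →
      x ∈ J.map (algebraMap B (MvPolynomial A₀ B)) → h x = 0 := by
    intro x hx hxJ
    let μP : (J : Submodule B B) ⊗[B] (MvPolynomial A₀ B) →ₗ[B] MvPolynomial A₀ B :=
      (TensorProduct.lid B _).toLinearMap ∘ₗ ((Submodule.subtype (J : Submodule B B)).rTensor _)
    let μX : (J : Submodule B B) ⊗[B] X →ₗ[B] X :=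
      (TensorProduct.lid B X).toLinearMap ∘ₗ ((Submodule.subtype (J : Submodule B B)).rTensor X)
    have hμP : ∀ (j : J) (z : MvPolynomial A₀ B), μP (j ⊗ₜ z) = (j : B) • z := by
      intro j z
      simp [μP]
    have hμX : ∀ (j : J) (z : X), μX (j ⊗ₜ z) = (j : B) • z := by
      intro j z
      simp [μX]
    obtain ⟨t, ht⟩ : ∃ t, μP t = x := by
      have hx' : x ∈ (J • (⊤ : Submodule B (MvPolynomial A₀ B))) := by
        rw [Ideal.smul_top_eq_map]; exact hxJ
      refine Submodule.smul_induction_on hx' ?_ ?_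
      · intro j hj n _
        exact ⟨⟨j, hj⟩ ⊗ₜ n, by rw [hμP]⟩
      · rintro a b ⟨ta, hta⟩ ⟨tb, htb⟩
        exact ⟨ta + tb, by rw [map_add, hta, htb]⟩
    have hnat : μX ∘ₗ (q.toLinearMap.lTensor J) = q.toLinearMap ∘ₗ μP := by
      apply TensorProduct.ext'
      intro j z
      simp only [LinearMap.comp_apply, LinearMap.lTensor_tmul, hμX, hμP,
        AlgHom.toLinearMap_apply, map_smul]
    have h0 : (q.toLinearMap.lTensor J) t = 0 := by
      have hinj : Function.Injective μX :=
        (TensorProduct.lid B X).injective.comp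
          (Module.Flat.rTensor_preserves_injective_linearMap _ (Submodule.injective_subtype _))
      apply hinj
      have h1 : μX ((q.toLinearMap.lTensor ↥(J : Submodule B B)) t) = q (μP t) :=
        LinearMap.congr_fun hnat t
      rw [map_zero, h1, ht]
      exact hx
    have hexact := lTensor_exact (↥(J : Submodule B B))
      (LinearMap.exact_subtype_ker_map q.toLinearMap) (hqs : Function.Surjective q.toLinearMap)
    obtain ⟨t', rfl⟩ := (hexact t).mp h0
    have hzero : (h.toLinearMap ∘ₗ μP ∘ₗ
        ((Submodule.subtype (LinearMap.ker q.toLinearMap)).lTensor J)) = 0 := by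
      apply TensorProduct.ext'
      intro j k
      simp only [LinearMap.comp_apply, LinearMap.lTensor_tmul, Submodule.coe_subtype, hμP,
        AlgHom.toLinearMap_apply, map_smul, LinearMap.zero_apply]
      have hk : h (k : MvPolynomial A₀ B) ∈ J.map (algebraMap B Y) := by
        rw [← hkp, RingHom.mem_ker, hph]
        have : q (k : MvPolynomial A₀ B) = 0 := k.2
        rw [this, map_zero]
      rw [Algebra.smul_def]
      exact aux_algebraMap_mul_eq_zero hJ j.2 hk
    have h2 := LinearMap.congr_fun hzero t'
    simp only [LinearMap.comp_apply, LinearMap.zero_apply, AlgHom.toLinearMap_apply] at h2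
    rw [ht] at h2
    exact h2
  -- lifting kernel elements
  have hI₀surj : ∀ y : MvPolynomial A₀ B₀, algebraMap (MvPolynomial A₀ B₀) A₀ y = 0 →
      ∃ x, q x = 0 ∧ ρ x = y := by
    intro y hy
    obtain ⟨x₁, rfl⟩ := hρs y
    have h1 : q x₁ ∈ J.map (algebraMap B X) := by
      rw [← hkf, RingHom.mem_ker, ← hcomm, hy]
    have h2 : q x₁ ∈ Ideal.map (q : MvPolynomial A₀ B →+* X)
        (J.map (algebraMap B (MvPolynomial A₀ B))) := by
      rw [Ideal.map_map]
      rwa [show (q : MvPolynomial A₀ B →+* X).comp (algebraMap B (MvPolynomial A₀ B))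
        = algebraMap B X from q.comp_algebraMap]
    obtain ⟨w, hwmem, hw⟩ := (Ideal.mem_map_iff_of_surjective _ hqs).mp h2
    refine ⟨x₁ - w, by rw [map_sub, hw, sub_self], ?_⟩
    have hw0 : ρ w = 0 := by
      rw [← hkerρ] at hwmem
      exact RingHom.mem_ker.mp hwmem
    rw [map_sub, hw0, sub_zero]
  have hmemI₀ : ∀ x, q x = 0 → ρ x ∈ RingHom.ker (algebraMap (MvPolynomial A₀ B₀) A₀) := by
    intro x hx
    rw [RingHom.mem_ker, hcomm, hx, map_zero]
  -- the ideal I₀ downstairs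
  have hI₀eq : RingHom.ker (algebraMap (MvPolynomial A₀ B₀) A₀)
      = Ideal.map ρ (RingHom.ker q) := by
    apply le_antisymm
    · intro y hy
      obtain ⟨x, hx0, rfl⟩ := hI₀surj y (RingHom.mem_ker.mp hy)
      exact Ideal.mem_map_of_mem ρ (RingHom.mem_ker.mpr hx0)
    · rw [Ideal.map_le_iff_le_comap]
      intro x hx
      rw [Ideal.mem_comap, RingHom.mem_ker, hcomm, RingHom.mem_ker.mp hx, map_zero]
  -- well-definedness
  have hW : ∀ x z : MvPolynomial A₀ B, q x = 0 → q z = 0 →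
      ρ x - ρ z ∈ (RingHom.ker (algebraMap (MvPolynomial A₀ B₀) A₀)) ^ 2 → h x = h z := by
    intro x z hx hz hmem
    rw [hI₀eq, ← Ideal.map_pow] at hmem
    obtain ⟨z₂, hz₂mem, hz₂⟩ := (Ideal.mem_map_iff_of_surjective _ hρs).mp hmem
    have hwJ : x - z - z₂ ∈ J.map (algebraMap B (MvPolynomial A₀ B)) := by
      rw [← hkerρ, RingHom.mem_ker, map_sub, map_sub, hz₂]
      ring
    have hz₂ker : q z₂ = 0 :=
      RingHom.mem_ker.mp (Ideal.pow_le_self two_ne_zero hz₂mem)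
    have hwker : q (x - z - z₂) = 0 := by
      rw [map_sub, map_sub, hx, hz, hz₂ker]; ring
    have h1 : h (x - z - z₂) = 0 := hflat _ hwker hwJ
    have h2 : h z₂ = 0 := by
      rw [pow_two] at hz₂mem
      refine Submodule.mul_induction_on hz₂mem ?_ ?_
      · intro m hm n hn
        have hhm : h m ∈ J.map (algebraMap B Y) := by
          rw [← hkp, RingHom.mem_ker, hph, RingHom.mem_ker.mp hm, map_zero]
        have hhn : h n ∈ J.map (algebraMap B Y) := by
          rw [← hkp, RingHom.mem_ker, hph, RingHom.mem_ker.mp hn, map_zero]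
        rw [map_mul]
        exact aux_mul_eq_zero hJ hhm hhn
      · intro a b ha hb
        rw [map_add, ha, hb, add_zero]
    rw [map_sub, map_sub, h2, sub_zero] at h1
    exact sub_eq_zero.mp h1
  -- representatives of cotangent classes
  have hrep : ∀ c : (RingHom.ker (algebraMap (MvPolynomial A₀ B₀) A₀)).Cotangent,
      ∃ x, ∃ hx : q x = 0, (RingHom.ker (algebraMap (MvPolynomial A₀ B₀) A₀)).toCotangent
        ⟨ρ x, hmemI₀ x hx⟩ = c := by
    intro c
    obtain ⟨y, rfl⟩ := Ideal.toCotangent_surjective _ c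
    obtain ⟨x, hx0, hx⟩ := hI₀surj y.1 (RingHom.mem_ker.mp y.2)
    exact ⟨x, hx0, by congr 1; exact Subtype.ext hx⟩
  let Φ : (RingHom.ker (algebraMap (MvPolynomial A₀ B₀) A₀)).Cotangent → Y :=
    fun c => h (hrep c).choose
  have heval' : ∀ (c) (x) (hx : q x = 0),
      (RingHom.ker (algebraMap (MvPolynomial A₀ B₀) A₀)).toCotangent ⟨ρ x, hmemI₀ x hx⟩ = c →
      Φ c = h x := by
    intro c x hx hcot
    obtain ⟨hx', hcot'⟩ := (hrep c).choose_spec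
    refine hW _ _ hx' hx ?_
    have := (Ideal.toCotangent_eq _).mp (hcot'.trans hcot.symm)
    simpa using this
  have hΦmem : ∀ c, Φ c ∈ J.map (algebraMap B Y) := by
    intro c
    obtain ⟨hx', _⟩ := (hrep c).choose_spec
    rw [← hkp, RingHom.mem_ker]
    show p (h _) = 0
    rw [hph, hx', map_zero]
  have hΦadd : ∀ c c', Φ (c + c') = Φ c + Φ c' := by
    intro c c'
    obtain ⟨a, ha, hca⟩ := hrep c
    obtain ⟨b, hb, hcb⟩ := hrep c'
    have hsum : q (a + b) = 0 := by rw [map_add, ha, hb, add_zero]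
    have heq : (RingHom.ker (algebraMap (MvPolynomial A₀ B₀) A₀)).toCotangent
        ⟨ρ (a + b), hmemI₀ _ hsum⟩ = c + c' := by
      rw [← hca, ← hcb, ← map_add]
      congr 1
      exact Subtype.ext (map_add ρ _ _)
    rw [heval' _ _ hsum heq, heval' _ _ ha hca, heval' _ _ hb hcb, map_add]
  have hΦsmul : ∀ (x : MvPolynomial A₀ B) c, Φ (ρ x • c) = h x * Φ c := by
    intro x c
    obtain ⟨b, hb, hcb⟩ := hrep c
    have hxb : q (x * b) = 0 := by rw [map_mul, hb, mul_zero]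
    have heq : (RingHom.ker (algebraMap (MvPolynomial A₀ B₀) A₀)).toCotangent
        ⟨ρ (x * b), hmemI₀ _ hxb⟩ = ρ x • c := by
      rw [← hcb, ← map_smul]
      congr 1
      refine Subtype.ext ?_
      show ρ (x * b) = ρ x • ρ b
      rw [map_mul, smul_eq_mul]
    rw [heval' _ _ hxb heq, heval' _ _ hb hcb, map_mul]
  have hΦzero : Φ 0 = 0 := by
    have h00 : q (0 : MvPolynomial A₀ B) = 0 := map_zero q
    have heq : (RingHom.ker (algebraMap (MvPolynomial A₀ B₀) A₀)).toCotangent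
        ⟨ρ 0, hmemI₀ _ h00⟩ = 0 := by
      rw [show (⟨ρ 0, hmemI₀ _ h00⟩ : RingHom.ker (algebraMap (MvPolynomial A₀ B₀) A₀))
        = 0 from Subtype.ext (map_zero ρ), map_zero]
    rw [heval' _ _ h00 heq, map_zero]
  -- formal smoothness: obtain the retraction
  obtain ⟨l, hl⟩ := (Algebra.FormallySmooth.iff_split_injection (R := B₀) hq0s).mp
    inferInstance
  obtain ⟨Δ, hΔI, hΔadd, hΔalg, hΔmul, hΔmem⟩ :
      ∃ Δ : MvPolynomial A₀ B → Y,
        (∀ x, q x = 0 → Δ x = h x) ∧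
        (∀ x y, Δ (x + y) = Δ x + Δ y) ∧
        (∀ b : B, Δ (algebraMap B (MvPolynomial A₀ B) b) = 0) ∧
        (∀ x y, Δ (x * y) = h x * Δ y + h y * Δ x) ∧
        (∀ x, Δ x ∈ J.map (algebraMap B Y)) := by
    refine ⟨fun x => Φ (l ((1 : A₀) ⊗ₜ[MvPolynomial A₀ B₀]
      (KaehlerDifferential.D B₀ (MvPolynomial A₀ B₀) (ρ x)))), ?_, ?_, ?_, ?_, ?_⟩
    · intro x hx
      show Φ (l _) = h x
      have h1 : l ((1 : A₀) ⊗ₜ[MvPolynomial A₀ B₀]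
          (KaehlerDifferential.D B₀ (MvPolynomial A₀ B₀) (ρ x)))
          = (RingHom.ker (algebraMap (MvPolynomial A₀ B₀) A₀)).toCotangent
            ⟨ρ x, hmemI₀ x hx⟩ :=
        LinearMap.congr_fun hl ((RingHom.ker (algebraMap (MvPolynomial A₀ B₀) A₀)).toCotangent
          ⟨ρ x, hmemI₀ x hx⟩)
      rw [h1]
      exact heval' _ _ hx rfl
    · intro x y
      show Φ (l _) = Φ (l _) + Φ (l _)
      rw [map_add ρ, map_add (KaehlerDifferential.D B₀ (MvPolynomial A₀ B₀)), tmul_add, map_add]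
      exact hΦadd _ _
    · intro b
      show Φ (l _) = 0
      have hb : ρ (algebraMap B (MvPolynomial A₀ B) b)
          = algebraMap B₀ (MvPolynomial A₀ B₀) (algebraMap B B₀ b) := by
        rw [MvPolynomial.algebraMap_eq, MvPolynomial.algebraMap_eq]
        exact MvPolynomial.map_C _ b
      rw [hb, Derivation.map_algebraMap, tmul_zero, map_zero]
      exact hΦzero
    · intro x y
      show Φ (l _) = h x * Φ (l _) + h y * Φ (l _)
      rw [map_mul ρ, Derivation.leibniz, tmul_add, tmul_smul, tmul_smul, map_add,
        map_smul, map_smul, hΦadd, hΦsmul, hΦsmul]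
    · intro x
      exact hΦmem _
  -- the corrected map
  let u' : MvPolynomial A₀ B →ₐ[B] Y :=
    MvPolynomial.aeval (fun a => s a - Δ (MvPolynomial.X a))
  have hu' : ∀ x, u' x = h x - Δ x := by
    intro x
    induction x using MvPolynomial.induction_on with
    | C b =>
      rw [show u' (MvPolynomial.C b) = algebraMap B Y b from MvPolynomial.aeval_C _ b,
        show h (MvPolynomial.C b) = algebraMap B Y b from MvPolynomial.aeval_C _ b]
      rw [show Δ (MvPolynomial.C b) = 0 from by
        rw [← MvPolynomial.algebraMap_eq]; exact hΔalg b]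
      ring
    | add x y hx hy =>
      rw [map_add, map_add, hΔadd, hx, hy]
      ring
    | mul_X x a hx =>
      rw [map_mul, hx, show u' (MvPolynomial.X a) = s a - Δ (MvPolynomial.X a) from
        MvPolynomial.aeval_X _ a]
      rw [map_mul, show h (MvPolynomial.X a) = s a from MvPolynomial.aeval_X _ a, hΔmul]
      rw [show h (MvPolynomial.X a) = s a from MvPolynomial.aeval_X _ a]
      have hzz : Δ x * Δ (MvPolynomial.X a) = 0 := aux_mul_eq_zero hJ (hΔmem _) (hΔmem _)
      linear_combination hzz
  have hu'ker : ∀ x, q x = 0 → u' x = 0 := by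
    intro x hx
    rw [hu', hΔI x hx, sub_self]
  -- descend to X
  let eqv : (MvPolynomial A₀ B ⧸ RingHom.ker q) ≃ₐ[B] X :=
    Ideal.quotientKerAlgEquivOfSurjective hqs
  let u₀ : (MvPolynomial A₀ B ⧸ RingHom.ker q) →ₐ[B] Y :=
    Ideal.Quotient.liftₐ (RingHom.ker q) u' (fun a ha => hu'ker a (RingHom.mem_ker.mp ha))
  let u : X →ₐ[B] Y := u₀.comp eqv.symm.toAlgHom
  have hueq : ∀ z, u (q z) = u' z := by
    intro z
    have h1 : eqv.symm (q z) = Ideal.Quotient.mk (RingHom.ker q) z := by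
      apply eqv.injective
      rw [AlgEquiv.apply_symm_apply]
      exact (Ideal.kerLiftAlg_mk q z).symm
    show u₀ (eqv.symm (q z)) = u' z
    rw [h1, Ideal.Quotient.liftₐ_apply]
    rfl
  refine ⟨u, ?_⟩
  apply AlgHom.ext
  intro x
  obtain ⟨z, rfl⟩ := hqs x
  rw [AlgHom.comp_apply, hueq, hu', map_sub, hph]
  have hpΔ : p (Δ z) = 0 := by
    have := hΔmem z
    rw [← hkp] at this
    exact RingHom.mem_ker.mp this
  rw [hpΔ, sub_zero]


set_option maxHeartbeats 800000 in
/-- Uniqueness up to isomorphism of liftings: let `J ⊆ B` be a square-zero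
ideal, `B₀ = B/J` (realized as a quotient `B → B₀` with kernel `J`), and `A₀` a formally
smooth `B₀`-algebra. If `A` and `A'` are flat `B`-algebras equipped with `B`-algebra
isomorphisms `A/JA ≅ A₀ ≅ A'/JA'` (i.e. two liftings of `A₀` over `B`), then there is a
`B`-algebra isomorphism `g : A ≅ A'` reducing to the identity of `A₀` modulo `J`. -/
theorem lifting_unique_up_to_iso
    {B : Type*} {B₀ A₀ : Type u} {A A' : Type*}
    [CommRing B] [CommRing B₀] [CommRing A₀] [CommRing A] [CommRing A']
    [Algebra B B₀] [Algebra B₀ A₀] [Algebra B A₀] [IsScalarTower B B₀ A₀]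
    [Algebra B A] [Algebra B A']
    (J : Ideal B) (hJ : J ^ 2 = ⊥)
    (hker : RingHom.ker (algebraMap B B₀) = J)
    (hsurj : Function.Surjective (algebraMap B B₀))
    [Module.Flat B A] [Module.Flat B A']
    [Algebra.FormallySmooth B₀ A₀]
    (e : (A ⧸ J.map (algebraMap B A)) ≃ₐ[B] A₀)
    (e' : (A' ⧸ J.map (algebraMap B A')) ≃ₐ[B] A₀) :
    ∃ g : A ≃ₐ[B] A', ∀ x : A,
      e' (Ideal.Quotient.mk (J.map (algebraMap B A')) (g x))
        = e (Ideal.Quotient.mk (J.map (algebraMap B A)) x) := by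
  classical
  let f : A →ₐ[B] A₀ :=
    (e : (A ⧸ J.map (algebraMap B A)) →ₐ[B] A₀).comp
      (Ideal.Quotient.mkₐ B (J.map (algebraMap B A)))
  let p : A' →ₐ[B] A₀ :=
    (e' : (A' ⧸ J.map (algebraMap B A')) →ₐ[B] A₀).comp
      (Ideal.Quotient.mkₐ B (J.map (algebraMap B A')))
  have hfa : ∀ x : A, f x = e (Ideal.Quotient.mk (J.map (algebraMap B A)) x) := fun _ => rfl
  have hpa : ∀ x : A', p x = e' (Ideal.Quotient.mk (J.map (algebraMap B A')) x) := fun _ => rfl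
  have hfs : Function.Surjective f := by
    intro a
    obtain ⟨y, hy⟩ := Ideal.Quotient.mk_surjective (I := J.map (algebraMap B A)) (e.symm a)
    exact ⟨y, by rw [hfa, hy, AlgEquiv.apply_symm_apply]⟩
  have hps : Function.Surjective p := by
    intro a
    obtain ⟨y, hy⟩ := Ideal.Quotient.mk_surjective (I := J.map (algebraMap B A')) (e'.symm a)
    exact ⟨y, by rw [hpa, hy, AlgEquiv.apply_symm_apply]⟩
  have hkf : RingHom.ker f = J.map (algebraMap B A) := by
    ext x
    rw [RingHom.mem_ker, hfa, ← Ideal.Quotient.eq_zero_iff_mem]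
    constructor
    · intro hx
      apply e.injective
      rw [hx, map_zero]
    · intro hx
      rw [hx, map_zero]
  have hkp : RingHom.ker p = J.map (algebraMap B A') := by
    ext x
    rw [RingHom.mem_ker, hpa, ← Ideal.Quotient.eq_zero_iff_mem]
    constructor
    · intro hx
      apply e'.injective
      rw [hx, map_zero]
    · intro hx
      rw [hx, map_zero]
  obtain ⟨u, hu⟩ := exists_lift_aux J hJ hker hsurj f hfs hkf p hps hkp
  obtain ⟨v, hv⟩ := exists_lift_aux J hJ hker hsurj p hps hkp f hfs hkf
  have hw1 : f.comp (v.comp u) = f := by rw [← AlgHom.comp_assoc, hv, hu]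
  have hw2 : p.comp (u.comp v) = p := by rw [← AlgHom.comp_assoc, hu, hv]
  have hb1 := aux_bijective_of_comp hJ f hkf (v.comp u) hw1
  have hb2 := aux_bijective_of_comp hJ p hkp (u.comp v) hw2
  have hub : Function.Bijective u := by
    constructor
    · have h1 : Function.Injective (⇑v ∘ ⇑u) := by
        have := hb1.injective
        rwa [AlgHom.coe_comp] at this
      exact h1.of_comp
    · have h2 : Function.Surjective (⇑u ∘ ⇑v) := by
        have := hb2.surjective
        rwa [AlgHom.coe_comp] at this
      exact h2.of_comp
  refine ⟨AlgEquiv.ofBijective u hub, ?_⟩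
  intro x
  have h3 := AlgHom.congr_fun hu x
  rw [AlgHom.comp_apply, hpa, hfa] at h3
  exact h3
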